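/- For every n ≥ 2 there exist maps g : F(2n−1) → E(n) and h : E(n) → F(2n−1), each preserving ∔, − and 0, such that g is surjective and g ∘ h = id on E(n). In other words, E(n) is a retract of the free F∞-module of rank 2n−1, and hence a projective F∞-module. -/

import Mathlib

open scoped Classical

def Sset (n : ℕ) : Set (ℕ × ℕ) :=
  {p | 1 ≤ p.1 ∧ p.1 ≤ n ∧ 1 ≤ p.2 ∧ p.2 ≤ n ∧ p.1 ≤ p.2 + 1 ∧ p.2 ≤ p.1 + 2}

/-- `S(n)` as a sublattice of `ℕ × ℕ` (componentwise max and min). -/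
def SL (n : ℕ) : Sublattice (ℕ × ℕ) where
  carrier := Sset n
  supClosed' := by
    rintro ⟨i, k⟩ h1 ⟨l, m⟩ h2
    simp only [Sset, Set.mem_setOf_eq, Prod.sup_def] at h1 h2 ⊢
    omega
  infClosed' := by
    rintro ⟨i, k⟩ h1 ⟨l, m⟩ h2
    simp only [Sset, Set.mem_setOf_eq, Prod.inf_def] at h1 h2 ⊢
    omega

/-- `D(n) = WithBot S(n)`: `S(n)` with a bottom element `O` adjoined. -/
abbrev Dn (n : ℕ) : Type := WithBot ↥(SL n)

/-- The element `a_{ik}` of `D(n)` (junk value `⊥` if `(i,k) ∉ S(n)`). -/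
noncomputable def aElt (n i k : ℕ) : Dn n :=
  if h : (i, k) ∈ SL n then (↑(⟨(i, k), h⟩ : ↥(SL n)) : Dn n) else ⊥

/-- F∞-module structure on `Option (Bool × α)` for a meet-semilattice `α`. -/
abbrev Emod (α : Type) : Type := Option (Bool × α)

/-- Negation: `−none = none`, `−some (ε, p) = some (¬ε, p)`. -/
def Emod.neg {α : Type} : Emod α → Emod α :=
  Option.map (fun p => (!p.1, p.2))

/-- Addition: `x ∔ none = none ∔ x = none`, and
`some (ε, p) ∔ some (ε', q) = some (ε, p ⊓ q)` if `ε = ε'`, `none` otherwise. -/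
noncomputable def Emod.add {α : Type} [SemilatticeInf α] : Emod α → Emod α → Emod α
  | some (ε, p), some (ε', q) => if ε = ε' then some (ε, p ⊓ q) else none
  | _, _ => none

/-- Nonzero vectors of the free F∞-module of rank `m`. -/
abbrev FVec (m : ℕ) : Type := {σ : Fin m → Option Bool // σ ≠ fun _ => none}

/-- The free F∞-module of rank `m`, with zero `none`. -/
abbrev Fm (m : ℕ) : Type := Option (FVec m)

/-- Negation on the free F∞-module: Boolean negation on each defined value. -/
def Fm.neg {m : ℕ} : Fm m → Fm m :=
  Option.map (fun σ => ⟨fun i => (σ.val i).map (fun b => !b), by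
    intro hcontra
    apply σ.prop
    funext i
    have h := congrFun hcontra i
    simpa using h⟩)

/-- Addition on the free F∞-module: `none` absorbs; two nonzero vectors add to `none`
if they clash in some coordinate, and otherwise to their pointwise merge. -/
noncomputable def Fm.add {m : ℕ} : Fm m → Fm m → Fm m
  | some σ, some τ =>
      if ∃ (i : Fin m) (b : Bool), σ.val i = some b ∧ τ.val i = some (!b) then none
      else some ⟨fun i => (σ.val i).or (τ.val i), by
        intro hcontra
        apply σ.prop
        funext i
        have h := congrFun hcontra i
        cases hv : σ.val i with
        | none => rfl
        | some b => rw [hv] at h; simp [Option.or] at h⟩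
  | _, _ => none

/-- A type with F∞-module operations `0`, `∔`, `−`. -/
class FStr (α : Type) where
  z : α
  add : α → α → α
  neg : α → α

noncomputable instance {α : Type} [SemilatticeInf α] : FStr (Emod α) :=
  ⟨none, Emod.add, Emod.neg⟩

noncomputable instance {m : ℕ} : FStr (Fm m) :=
  ⟨none, Fm.add, Fm.neg⟩

/-- A map preserving `0`, `∔` and `−`. -/
def IsFHom {α β : Type} [FStr α] [FStr β] (f : α → β) : Prop :=
  f FStr.z = FStr.z ∧ (∀ x y, f (FStr.add x y) = FStr.add (f x) (f y)) ∧
    ∀ x, f (FStr.neg x) = FStr.neg (f x)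

/-- The F∞-module `E(n) = Option (Bool × S(n))`. -/
abbrev En (n : ℕ) : Type := Emod ↥(SL n)

/-- The `2n-1` meet-prime generators of `S(n)`. -/
def pg (n j : ℕ) : ℕ × ℕ :=
  if j < n then (j + 1, min (j + 3) n) else (j - n + 2, j - n + 1)

lemma pg_mem {n j : ℕ} (hn : 2 ≤ n) (hj : j < 2 * n - 1) : pg n j ∈ Sset n := by
  unfold pg
  split <;> simp only [Sset, Set.mem_setOf_eq] <;> omega

lemma pg_prime {n j : ℕ} (hn : 2 ≤ n) (hj : j < 2 * n - 1) {p q : ℕ × ℕ}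
    (hp : p ∈ Sset n) (hq : q ∈ Sset n) (h : p ⊓ q ≤ pg n j) :
    p ≤ pg n j ∨ q ≤ pg n j := by
  obtain ⟨p1, p2⟩ := p; obtain ⟨q1, q2⟩ := q
  simp only [Sset, Set.mem_setOf_eq] at hp hq
  simp only [Prod.inf_def, pg] at h ⊢
  rcases Nat.lt_or_ge j n with hc | hc
  · rw [if_pos hc] at h ⊢
    simp only [Prod.mk_le_mk] at h ⊢
    omega
  · rw [if_neg (by omega)] at h ⊢
    simp only [Prod.mk_le_mk] at h ⊢
    omega

lemma pg_top {n : ℕ} (hn : 2 ≤ n) {p : ℕ × ℕ} (hp : p ∈ Sset n) : p ≤ pg n (n - 1) := by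
  obtain ⟨p1, p2⟩ := p
  simp only [Sset, Set.mem_setOf_eq] at hp
  simp only [pg]
  split <;> simp only [Prod.mk_le_mk] <;> omega

lemma pg_exists_fst {n : ℕ} (hn : 2 ≤ n) {p : ℕ × ℕ} (hp : p ∈ Sset n) :
    ∃ j < 2 * n - 1, p ≤ pg n j ∧ (pg n j).1 ≤ p.1 := by
  obtain ⟨p1, p2⟩ := p
  simp only [Sset, Set.mem_setOf_eq] at hp
  refine ⟨p1 - 1, by omega, ?_⟩
  simp only [pg]
  split <;> simp only [Prod.mk_le_mk] <;> omega

lemma pg_exists_snd {n : ℕ} (hn : 2 ≤ n) {p : ℕ × ℕ} (hp : p ∈ Sset n) :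
    ∃ j < 2 * n - 1, p ≤ pg n j ∧ (pg n j).2 ≤ p.2 := by
  obtain ⟨p1, p2⟩ := p
  simp only [Sset, Set.mem_setOf_eq] at hp
  rcases lt_or_ge p2 n with hc | hc
  · refine ⟨n + p2 - 1, by omega, ?_⟩
    simp only [pg]
    split <;> simp only [Prod.mk_le_mk] <;> omega
  · refine ⟨p1 - 1, by omega, ?_⟩
    simp only [pg]
    split <;> simp only [Prod.mk_le_mk] <;> omega

lemma exists_val {m : ℕ} (σ : FVec m) : ∃ i b, σ.val i = some b := by
  by_contra hc
  push_neg at hc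
  apply σ.prop
  funext i
  cases hv : σ.val i with
  | none => rfl
  | some b => exact absurd hv (hc i b)

/-- The set of coordinates where `σ` is defined. -/
noncomputable def defset {m : ℕ} (σ : FVec m) : Finset (Fin m) :=
  Finset.univ.filter fun i => σ.val i ≠ none

lemma mem_defset {m : ℕ} {σ : FVec m} {i : Fin m} : i ∈ defset σ ↔ σ.val i ≠ none := by
  simp [defset]

lemma defset_nonempty {m : ℕ} (σ : FVec m) : (defset σ).Nonempty := by
  obtain ⟨i, b, hib⟩ := exists_val σ
  exact ⟨i, mem_defset.2 (by simp [hib])⟩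

/-- The meet of the generators over the defined coordinates. -/
noncomputable def infp (n : ℕ) (hn : 2 ≤ n) (σ : FVec (2 * n - 1)) : ↥(SL n) :=
  ⟨(defset σ).inf' (defset_nonempty σ) (fun j => pg n j),
    (SL n).infClosed'.finsetInf'_mem _ (fun j _ => pg_mem hn j.isLt)⟩

/-- The uniform sign of a nonzero vector, if any. -/
noncomputable def usign {m : ℕ} (σ : FVec m) : Option Bool :=
  if ∀ i, σ.val i ≠ some false then some true
  else if ∀ i, σ.val i ≠ some true then some false
  else none

lemma usign_eq_some {m : ℕ} {σ : FVec m} {a : Bool} :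
    usign σ = some a ↔ ∀ i b, σ.val i = some b → b = a := by
  constructor
  · intro h i b hib
    unfold usign at h
    split_ifs at h with h1 h2
    · cases b with
      | false => exact absurd hib (h1 i)
      | true => simpa using h.symm
    · cases b with
      | true => exact absurd hib (h2 i)
      | false => simpa using h.symm
  · intro h
    obtain ⟨i0, b0, hib0⟩ := exists_val σ
    have hb0 := h i0 b0 hib0
    subst hb0
    unfold usign
    cases b0 with
    | true =>
      rw [if_pos]
      intro i hi
      exact absurd (h i false hi) (by simp)
    | false =>
      rw [if_neg, if_pos]
      · intro i hi
        exact absurd (h i true hi) (by simp)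
      · push_neg
        exact ⟨i0, hib0⟩

lemma usign_eq_none {m : ℕ} {σ : FVec m} :
    usign σ = none ↔ (∃ i, σ.val i = some true) ∧ (∃ i, σ.val i = some false) := by
  unfold usign
  constructor
  · intro h
    split_ifs at h with h1 h2
    push_neg at h1 h2
    exact ⟨h2, h1⟩
  · rintro ⟨⟨i, hi⟩, ⟨j, hj⟩⟩
    rw [if_neg, if_neg] <;> push_neg
    · exact ⟨i, hi⟩
    · exact ⟨j, hj⟩

/-- The map `g`. -/
noncomputable def gmap (n : ℕ) (hn : 2 ≤ n) : Fm (2 * n - 1) → En n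
  | none => none
  | some σ => (usign σ).map fun b => (b, infp n hn σ)

/-- The indicator vector of the generators above `p`, with sign `ε`. -/
noncomputable def hvec (n : ℕ) (hn : 2 ≤ n) (ε : Bool) (p : ↥(SL n)) : FVec (2 * n - 1) :=
  ⟨fun j => if (p : ℕ × ℕ) ≤ pg n j then some ε else none, by
    intro hc
    have h1 : (p : ℕ × ℕ) ≤ pg n (↑(⟨n - 1, by omega⟩ : Fin (2 * n - 1))) := pg_top hn p.2
    have h2 := congrFun hc (⟨n - 1, by omega⟩ : Fin (2 * n - 1))
    simp only [if_pos h1] at h2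
    exact Option.some_ne_none ε h2⟩

/-- The map `h`. -/
noncomputable def hmap (n : ℕ) (hn : 2 ≤ n) : En n → Fm (2 * n - 1)
  | none => none
  | some (ε, p) => some (hvec n hn ε p)

lemma infp_congr {n : ℕ} (hn : 2 ≤ n) {σ τ : FVec (2 * n - 1)} (h : defset σ = defset τ) :
    infp n hn σ = infp n hn τ :=
  Subtype.ext (Finset.inf'_congr (defset_nonempty σ) h (fun _ _ => rfl))

lemma infp_merge {n : ℕ} (hn : 2 ≤ n) {σ τ ρ : FVec (2 * n - 1)}
    (hρ : ∀ i, ρ.val i = (σ.val i).or (τ.val i)) :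
    infp n hn ρ = infp n hn σ ⊓ infp n hn τ := by
  apply Subtype.ext
  have hd : defset ρ = defset σ ∪ defset τ := by
    ext i
    simp only [mem_defset, Finset.mem_union, hρ i]
    cases σ.val i <;> cases τ.val i <;> simp [Option.or]
  rw [Sublattice.coe_inf]
  show ((defset ρ).inf' (defset_nonempty ρ) fun j => pg n j) = _
  rw [Finset.inf'_congr (defset_nonempty ρ) hd (fun _ _ => rfl),
    Finset.inf'_union (defset_nonempty σ) (defset_nonempty τ)]
  rfl

lemma defset_map {m : ℕ} {σ ρ : FVec m} {f : Bool → Bool}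
    (h : ∀ i, ρ.val i = (σ.val i).map f) : defset ρ = defset σ := by
  ext i
  simp only [mem_defset, h i]
  cases σ.val i <;> simp

lemma usign_neg {m : ℕ} {σ ρ : FVec m} (h : ∀ i, ρ.val i = (σ.val i).map (fun b => !b)) :
    usign ρ = (usign σ).map (fun b => !b) := by
  cases hu : usign σ with
  | none =>
    rw [usign_eq_none] at hu
    obtain ⟨⟨i, hi⟩, ⟨j, hj⟩⟩ := hu
    simp only [Option.map_none]
    rw [usign_eq_none]
    refine ⟨⟨j, ?_⟩, ⟨i, ?_⟩⟩ <;> simp [h j, h i, hi, hj]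
  | some a =>
    simp only [Option.map_some]
    rw [usign_eq_some] at hu ⊢
    intro i b hib
    rw [h i] at hib
    cases hv : σ.val i with
    | none => rw [hv] at hib; simp at hib
    | some c =>
      rw [hv] at hib
      simp only [Option.map_some, Option.some_inj] at hib
      rw [← hib, hu i c hv]

lemma emod_add_none_left {α : Type} [SemilatticeInf α] (x : Emod α) :
    Emod.add none x = none := by cases x <;> rfl

lemma emod_add_none_right {α : Type} [SemilatticeInf α] (x : Emod α) :
    Emod.add x none = none := by cases x <;> rfl

lemma emod_add_some_some {α : Type} [SemilatticeInf α] (ε ε' : Bool) (p q : α) :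
    Emod.add (some (ε, p)) (some (ε', q)) = if ε = ε' then some (ε, p ⊓ q) else none := rfl

lemma gmap_none {n : ℕ} (hn : 2 ≤ n) : gmap n hn none = none := rfl

lemma gmap_some {n : ℕ} (hn : 2 ≤ n) (σ : FVec (2 * n - 1)) :
    gmap n hn (some σ) = (usign σ).map fun b => (b, infp n hn σ) := rfl

lemma gmap_neg {n : ℕ} (hn : 2 ≤ n) (x : Fm (2 * n - 1)) :
    gmap n hn (Fm.neg x) = Emod.neg (gmap n hn x) := by
  cases x with
  | none => rfl
  | some σ =>
    rw [show Fm.neg (some σ) = some (⟨fun i => (σ.val i).map (fun b => !b), by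
      intro hcontra
      apply σ.prop
      funext i
      have h := congrFun hcontra i
      simpa using h⟩ : FVec _) from rfl]
    rw [gmap_some, gmap_some]
    rw [usign_neg (σ := σ) (fun i => rfl)]
    rw [infp_congr hn (defset_map (σ := σ) (fun i => rfl))]
    cases usign σ <;> rfl

lemma fm_add_none_left {m : ℕ} (x : Fm m) : Fm.add none x = none := by cases x <;> rfl

lemma fm_add_none_right {m : ℕ} (x : Fm m) : Fm.add x none = none := by cases x <;> rfl

lemma merge_left {m : ℕ} {σ τ ρ : FVec m} (hρ : ∀ i, ρ.val i = (σ.val i).or (τ.val i))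
    {i : Fin m} {b : Bool} (h : σ.val i = some b) : ρ.val i = some b := by
  rw [hρ i, h]; rfl

lemma merge_right {m : ℕ} {σ τ ρ : FVec m} (hρ : ∀ i, ρ.val i = (σ.val i).or (τ.val i))
    (hnc : ¬ ∃ (i : Fin m) (b : Bool), σ.val i = some b ∧ τ.val i = some (!b))
    {i : Fin m} {b : Bool} (h : τ.val i = some b) : ρ.val i = some b := by
  rw [hρ i, h]
  cases hv : σ.val i with
  | none => rfl
  | some c =>
    rcases eq_or_ne c b with hcb | hcb
    · subst hcb; rfl
    · exact absurd ⟨i, c, hv, by rw [h]; congr 1; cases b <;> cases c <;> simp_all⟩ hnc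

lemma gmap_merge {n : ℕ} (hn : 2 ≤ n) {σ τ ρ : FVec (2 * n - 1)}
    (hρ : ∀ i, ρ.val i = (σ.val i).or (τ.val i))
    (hnc : ¬ ∃ (i : Fin (2 * n - 1)) (b : Bool), σ.val i = some b ∧ τ.val i = some (!b)) :
    gmap n hn (some ρ) = Emod.add (gmap n hn (some σ)) (gmap n hn (some τ)) := by
  rw [gmap_some, gmap_some, gmap_some]
  have hinf := infp_merge hn hρ
  cases hu : usign σ with
  | none =>
    obtain ⟨⟨i, hi⟩, ⟨j, hj⟩⟩ := usign_eq_none.1 hu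
    have : usign ρ = none :=
      usign_eq_none.2 ⟨⟨i, merge_left hρ hi⟩, ⟨j, merge_left hρ hj⟩⟩
    rw [this, Option.map_none, Option.map_none, emod_add_none_left]
  | some a =>
    cases hv : usign τ with
    | none =>
      obtain ⟨⟨i, hi⟩, ⟨j, hj⟩⟩ := usign_eq_none.1 hv
      have : usign ρ = none :=
        usign_eq_none.2 ⟨⟨i, merge_right hρ hnc hi⟩, ⟨j, merge_right hρ hnc hj⟩⟩
      rw [this, Option.map_none, Option.map_none, emod_add_none_right]
    | some a' =>
      rcases eq_or_ne a a' with haa | haa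
      · subst haa
        have hρu : usign ρ = some a := by
          rw [usign_eq_some]
          intro i b hib
          rw [hρ i] at hib
          cases hσ : σ.val i with
          | some c =>
            rw [hσ] at hib
            injection hib with hib
            subst hib
            exact usign_eq_some.1 hu i c hσ
          | none =>
            rw [hσ] at hib
            exact usign_eq_some.1 hv i b hib
        rw [hρu, Option.map_some, Option.map_some, Option.map_some,
          emod_add_some_some, if_pos rfl, hinf]
      · have hρu : usign ρ = none := by
          obtain ⟨i, b, hi⟩ := exists_val σ
          obtain ⟨j, b', hj⟩ := exists_val τ
          have hb : b = a := usign_eq_some.1 hu i b hi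
          have hb' : b' = a' := usign_eq_some.1 hv j b' hj
          have h1 := merge_left hρ hi
          have h2 := merge_right hρ hnc hj
          rw [hb] at h1
          rw [hb'] at h2
          refine usign_eq_none.2 ?_
          cases a with
          | false =>
            cases a' with
            | false => exact absurd rfl haa
            | true => exact ⟨⟨j, h2⟩, ⟨i, h1⟩⟩
          | true =>
            cases a' with
            | false => exact ⟨⟨i, h1⟩, ⟨j, h2⟩⟩
            | true => exact absurd rfl haa
        rw [hρu, Option.map_none, Option.map_some, Option.map_some,
          emod_add_some_some, if_neg haa]

lemma gmap_add {n : ℕ} (hn : 2 ≤ n) (x y : Fm (2 * n - 1)) :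
    gmap n hn (Fm.add x y) = Emod.add (gmap n hn x) (gmap n hn y) := by
  cases x with
  | none => rw [fm_add_none_left, gmap_none, emod_add_none_left]
  | some σ =>
    cases y with
    | none => rw [fm_add_none_right, gmap_none, emod_add_none_right]
    | some τ =>
      by_cases hnc : ∃ (i : Fin (2 * n - 1)) (b : Bool), σ.val i = some b ∧ τ.val i = some (!b)
      · rw [show Fm.add (some σ) (some τ) = none by rw [Fm.add, if_pos hnc], gmap_none]
        obtain ⟨i, b, h1, h2⟩ := hnc
        cases hu : usign σ with
        | none => rw [gmap_some, hu, Option.map_none, emod_add_none_left]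
        | some a =>
          cases hv : usign τ with
          | none => rw [gmap_some (σ := τ), hv, Option.map_none, emod_add_none_right]
          | some a' =>
            have ha : b = a := usign_eq_some.1 hu i b h1
            have ha' : (!b) = a' := usign_eq_some.1 hv i (!b) h2
            rw [gmap_some, gmap_some, hu, hv, Option.map_some, Option.map_some,
              emod_add_some_some, if_neg (by rw [← ha, ← ha']; simp)]
      · rw [show Fm.add (some σ) (some τ) = some ⟨fun i => (σ.val i).or (τ.val i), by
          intro hcontra
          apply σ.prop
          funext i
          have h := congrFun hcontra i
          cases hv : σ.val i with
          | none => rfl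
          | some b => rw [hv] at h; simp [Option.or] at h⟩ by rw [Fm.add, if_neg hnc]]
        exact gmap_merge hn (fun i => rfl) hnc

lemma hvec_val {n : ℕ} (hn : 2 ≤ n) (ε : Bool) (p : ↥(SL n)) (j : Fin (2 * n - 1)) :
    (hvec n hn ε p).val j = if (p : ℕ × ℕ) ≤ pg n ↑j then some ε else none := rfl

lemma usign_hvec {n : ℕ} (hn : 2 ≤ n) (ε : Bool) (p : ↥(SL n)) :
    usign (hvec n hn ε p) = some ε := by
  rw [usign_eq_some]
  intro j b hjb
  rw [hvec_val] at hjb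
  split at hjb
  · exact (Option.some_inj.1 hjb).symm
  · exact absurd hjb (Option.some_ne_none _).symm

lemma infp_hvec {n : ℕ} (hn : 2 ≤ n) (ε : Bool) (p : ↥(SL n)) :
    infp n hn (hvec n hn ε p) = p := by
  have hmem : ∀ j : Fin (2 * n - 1), j ∈ defset (hvec n hn ε p) ↔ (p : ℕ × ℕ) ≤ pg n ↑j := by
    intro j
    rw [mem_defset, hvec_val]
    split <;> simp_all
  apply Subtype.ext
  apply le_antisymm
  · obtain ⟨j1, hj1, hle1, hfst⟩ := pg_exists_fst hn p.2
    obtain ⟨j2, hj2, hle2, hsnd⟩ := pg_exists_snd hn p.2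
    have h1 : (↑(infp n hn (hvec n hn ε p)) : ℕ × ℕ) ≤ pg n j1 :=
      Finset.inf'_le _ ((hmem ⟨j1, hj1⟩).2 hle1)
    have h2 : (↑(infp n hn (hvec n hn ε p)) : ℕ × ℕ) ≤ pg n j2 :=
      Finset.inf'_le _ ((hmem ⟨j2, hj2⟩).2 hle2)
    exact ⟨le_trans h1.1 hfst, le_trans h2.2 hsnd⟩
  · exact Finset.le_inf' (defset_nonempty _) _ fun j hj => (hmem j).1 hj

lemma hmap_gmap {n : ℕ} (hn : 2 ≤ n) (x : En n) : gmap n hn (hmap n hn x) = x := by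
  cases x with
  | none => rfl
  | some y =>
    obtain ⟨ε, p⟩ := y
    show gmap n hn (some (hvec n hn ε p)) = _
    rw [gmap_some, usign_hvec, Option.map_some, infp_hvec]

lemma hvec_noclash {n : ℕ} (hn : 2 ≤ n) (ε : Bool) (p q : ↥(SL n)) :
    ¬ ∃ (i : Fin (2 * n - 1)) (b : Bool),
      (hvec n hn ε p).val i = some b ∧ (hvec n hn ε q).val i = some (!b) := by
  rintro ⟨i, b, h1, h2⟩
  rw [hvec_val] at h1 h2
  split at h1
  · split at h2
    · injection h1 with h1
      injection h2 with h2
      rw [← h1] at h2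
      exact absurd h2 (by cases ε <;> simp)
    · exact absurd h2 (Option.some_ne_none _).symm
  · exact absurd h1 (Option.some_ne_none _).symm

lemma hmap_add {n : ℕ} (hn : 2 ≤ n) (x y : En n) :
    hmap n hn (Emod.add x y) = Fm.add (hmap n hn x) (hmap n hn y) := by
  cases x with
  | none =>
    rw [emod_add_none_left]
    show (none : Fm (2 * n - 1)) = Fm.add none (hmap n hn y)
    rw [fm_add_none_left]
  | some u =>
    obtain ⟨ε, p⟩ := u
    cases y with
    | none =>
      rw [emod_add_none_right]
      show (none : Fm (2 * n - 1)) = Fm.add (hmap n hn (some (ε, p))) none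
      rw [fm_add_none_right]
    | some v =>
      obtain ⟨ε', q⟩ := v
      rw [emod_add_some_some]
      rcases eq_or_ne ε ε' with hee | hee
      · subst hee
        rw [if_pos rfl]
        show some (hvec n hn ε (p ⊓ q)) = Fm.add (some (hvec n hn ε p)) (some (hvec n hn ε q))
        rw [Fm.add, if_neg (hvec_noclash hn ε p q)]
        refine congrArg some (Subtype.ext (funext fun j => ?_))
        show (if ((p ⊓ q : ↥(SL n)) : ℕ × ℕ) ≤ pg n ↑j then some ε else none) =
          ((if (p : ℕ × ℕ) ≤ pg n ↑j then some ε else none).or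
            (if (q : ℕ × ℕ) ≤ pg n ↑j then some ε else none))
        have hiff : ((p ⊓ q : ↥(SL n)) : ℕ × ℕ) ≤ pg n ↑j ↔
            ((p : ℕ × ℕ) ≤ pg n ↑j ∨ (q : ℕ × ℕ) ≤ pg n ↑j) := by
          rw [Sublattice.coe_inf]
          constructor
          · exact fun h => pg_prime hn j.isLt p.2 q.2 h
          · rintro (h | h)
            · exact le_trans inf_le_left h
            · exact le_trans inf_le_right h
        by_cases h1 : (p : ℕ × ℕ) ≤ pg n ↑j
        · rw [if_pos h1, if_pos (hiff.2 (Or.inl h1))]; rfl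
        · rw [if_neg h1]
          by_cases h2 : (q : ℕ × ℕ) ≤ pg n ↑j
          · rw [if_pos h2, if_pos (hiff.2 (Or.inr h2))]; rfl
          · rw [if_neg h2, if_neg (fun hc => (hiff.1 hc).elim h1 h2)]; rfl
      · rw [if_neg hee]
        show (none : Fm (2 * n - 1)) = Fm.add (some (hvec n hn ε p)) (some (hvec n hn ε' q))
        rw [Fm.add, if_pos]
        refine ⟨⟨n - 1, by omega⟩, ε, ?_, ?_⟩
        · rw [hvec_val, if_pos (pg_top hn p.2)]
        · rw [hvec_val, if_pos (pg_top hn q.2)]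
          congr 1
          cases ε <;> cases ε' <;> simp_all

lemma hmap_neg {n : ℕ} (hn : 2 ≤ n) (x : En n) :
    hmap n hn (Emod.neg x) = Fm.neg (hmap n hn x) := by
  cases x with
  | none => rfl
  | some u =>
    obtain ⟨ε, p⟩ := u
    show some (hvec n hn (!ε) p) = Fm.neg (some (hvec n hn ε p))
    rw [show Fm.neg (some (hvec n hn ε p)) =
        some (⟨fun j => ((hvec n hn ε p).val j).map (fun b => !b), by
          intro hc
          apply (hvec n hn ε p).prop
          funext i
          have h := congrFun hc i
          simpa using h⟩ : FVec (2 * n - 1)) from rfl]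
    refine congrArg some (Subtype.ext (funext fun j => ?_))
    show (if (p : ℕ × ℕ) ≤ pg n ↑j then some (!ε) else none) =
      ((hvec n hn ε p).val j).map (fun b => !b)
    rw [hvec_val]
    split <;> rfl

theorem stmt5' (n : ℕ) (hn : 2 ≤ n) :
    ∃ (g : Fm (2 * n - 1) → En n) (h : En n → Fm (2 * n - 1)),
      IsFHom g ∧ IsFHom h ∧ Function.Surjective g ∧ ∀ x, g (h x) = x :=
  ⟨gmap n hn, hmap n hn, ⟨rfl, gmap_add hn, gmap_neg hn⟩,
    ⟨rfl, hmap_add hn, hmap_neg hn⟩,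
    fun x => ⟨hmap n hn x, hmap_gmap hn x⟩, hmap_gmap hn⟩

/-- For every `n ≥ 2` there exist maps `g : F(2n−1) → E(n)` and `h : E(n) → F(2n−1)`,
each preserving `∔`, `−` and `0`, with `g` surjective and `g ∘ h = id`: `E(n)` is a
retract of the free F∞-module of rank `2n−1`, hence a projective F∞-module. -/
theorem stmt5 (n : ℕ) (hn : 2 ≤ n) :
    ∃ (g : Fm (2 * n - 1) → En n) (h : En n → Fm (2 * n - 1)),
      IsFHom g ∧ IsFHom h ∧ Function.Surjective g ∧ ∀ x, g (h x) = x := by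
  exact stmt5' n hn
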